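/- arXiv:2010.12946 — 3 statements merged into one kernel-verified Lean document; each statement's English description precedes it below -/
import Mathlib

section
/- Let d ≥ 2, R > 0, and let μ be a measure on ℝ^d that is supported in the closed ball of radius R around the origin and satisfies μ(A) ≤ |A| (Lebesgue measure) for every measurable set A. Then there is a constant c_d > 0 depending only on d such that for every continuously differentiable f : ℝ^d → ℝ with f(0) = 0, one has |∫_{ℝ^d} f(x) dμ(x)| ≤ c_d · R · μ(ℝ^d)^{(d−1)/d} · ‖∇f‖_{L^{d,1}({x : ‖x‖ ≤ R})}. -/
open MeasureTheory Metric
open scoped Pointwise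
open scoped ENNReal

noncomputable section

/-- The Lorentz `L^{d,1}` norm of `g` on `X`:
`‖g‖_{L^{d,1}(X)} = d ∫₀^∞ |{x ∈ X : |g x| ≥ t}|^{1/d} dt`. -/
def lorentzNorm (d : ℕ) (g : EuclideanSpace ℝ (Fin d) → ℝ)
    (X : Set (EuclideanSpace ℝ (Fin d))) : ℝ :=
  d * ∫ t in Set.Ioi (0 : ℝ), (volume {x ∈ X | t ≤ |g x|}).toReal ^ ((1 : ℝ) / d)

lemma key1d (d : ℕ) (hd : 2 ≤ d) (M V : ℝ≥0∞) (hM : M ≠ ∞) (hV : V ≠ ∞) :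
    ∫⁻ t in Set.Ioc (0:ℝ) 1, min M (ENNReal.ofReal (t⁻¹ ^ d) * V) ≤
      2 * M ^ (((d:ℝ)-1)/d) * V ^ ((1:ℝ)/d) := by
  have hd0 : (0:ℝ) < d := by positivity
  have hdne : (d:ℝ) ≠ 0 := hd0.ne'
  have hd1 : (1:ℝ) ≤ (d:ℝ) - 1 := by
    have : (2:ℝ) ≤ d := by exact_mod_cast hd
    linarith
  rcases eq_or_ne M 0 with rfl | hM0
  · exact le_trans (lintegral_mono fun t => min_le_left _ _) (by simp)
  rcases eq_or_ne V 0 with rfl | hV0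
  · refine le_trans (lintegral_mono (g := fun _ => (0:ℝ≥0∞)) fun t => ?_) (by simp)
    simp
  set m := M.toReal with hm_def
  set v := V.toReal with hv_def
  have hm : 0 < m := ENNReal.toReal_pos hM0 hM
  have hv : 0 < v := ENNReal.toReal_pos hV0 hV
  set A := M ^ (((d:ℝ)-1)/d) * V ^ ((1:ℝ)/d) with hA_def
  have hexp1 : (0:ℝ) ≤ ((d:ℝ)-1)/d := by
    apply div_nonneg _ hd0.le; linarith
  have hexp2 : (0:ℝ) ≤ (1:ℝ)/d := by positivity
  have hAne : A ≠ ∞ :=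
    ENNReal.mul_ne_top (ENNReal.rpow_ne_top_of_nonneg hexp1 hM)
      (ENNReal.rpow_ne_top_of_nonneg hexp2 hV)
  have hAtoReal : A.toReal = m ^ (((d:ℝ)-1)/d) * v ^ ((1:ℝ)/d) := by
    rw [hA_def, ENNReal.toReal_mul, ← ENNReal.toReal_rpow, ← ENNReal.toReal_rpow]
  set r := (v/m) ^ ((1:ℝ)/d) with hr_def
  have hr : 0 < r := Real.rpow_pos_of_pos (by positivity) _
  have hrd : r ^ ((d:ℝ)) = v/m := by
    rw [hr_def, ← Real.rpow_mul (by positivity), one_div,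
      inv_mul_cancel₀ hdne, Real.rpow_one]
  -- key real identity: m * r = A.toReal
  have hid : m * r = m ^ (((d:ℝ)-1)/d) * v ^ ((1:ℝ)/d) := by
    rw [hr_def, Real.div_rpow hv.le hm.le, div_eq_mul_inv, ← Real.rpow_neg hm.le]
    rw [show m * (v ^ ((1:ℝ)/d) * m ^ (-((1:ℝ)/d))) =
        (m ^ (1:ℝ) * m ^ (-((1:ℝ)/d))) * v ^ ((1:ℝ)/d) by rw [Real.rpow_one]; ring]
    rw [← Real.rpow_add hm]
    congr 1
    field_simp
    ring_nf
  have hid2 : v * r ^ ((1:ℝ) - d) = m * r := by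
    rw [Real.rpow_sub hr, Real.rpow_one, hrd]
    field_simp
  -- the two ENNReal bounds
  have hMr : M * ENNReal.ofReal r ≤ A := by
    refine (ENNReal.toReal_le_toReal (by finiteness) hAne).mp ?_
    rw [ENNReal.toReal_mul, ENNReal.toReal_ofReal hr.le, hAtoReal, ← hm_def, ← hid]
  have hVr : V * ENNReal.ofReal (r ^ ((1:ℝ) - d)) ≤ A := by
    refine (ENNReal.toReal_le_toReal (by finiteness) hAne).mp ?_
    rw [ENNReal.toReal_mul, ENNReal.toReal_ofReal (Real.rpow_pos_of_pos hr _).le,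
      hAtoReal, ← hv_def, ← hid, hid2, hid]
  have hgoal : (2:ℝ≥0∞) * M ^ (((d:ℝ)-1)/d) * V ^ ((1:ℝ)/d) = 2 * A := by
    rw [hA_def, mul_assoc]
  rw [hgoal]
  rcases le_or_gt 1 r with hr1 | hr1
  · -- r ≥ 1 : crude bound by M
    have hMV : M ≤ V := by
      have h1 : (1:ℝ) ≤ v/m := by
        rw [← hrd]
        exact Real.one_le_rpow hr1 hd0.le
      have : m ≤ v := by
        rw [le_div_iff₀ hm] at h1; linarith
      exact (ENNReal.toReal_le_toReal hM hV).mp this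
    have hMA : M ≤ A := by
      have : M = M ^ (((d:ℝ)-1)/d) * M ^ ((1:ℝ)/d) := by
        rw [← ENNReal.rpow_add _ _ hM0 hM]
        rw [show ((d:ℝ)-1)/d + 1/d = 1 by field_simp; ring, ENNReal.rpow_one]
      rw [this, hA_def]
      exact mul_le_mul_right (ENNReal.rpow_le_rpow hMV hexp2) _
    calc ∫⁻ t in Set.Ioc (0:ℝ) 1, min M (ENNReal.ofReal (t⁻¹ ^ d) * V)
        ≤ ∫⁻ _ in Set.Ioc (0:ℝ) 1, M := lintegral_mono fun t => min_le_left _ _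
      _ = M * volume (Set.Ioc (0:ℝ) 1) := setLIntegral_const _ _
      _ = M := by simp [Real.volume_Ioc]
      _ ≤ A := hMA
      _ ≤ 2 * A := by
          nth_rewrite 1 [← one_mul A]
          exact mul_le_mul_left one_le_two _
  · -- r < 1 : split at r
    have hsplit : Set.Ioc (0:ℝ) 1 = Set.Ioc 0 r ∪ Set.Ioc r 1 :=
      (Set.Ioc_union_Ioc_eq_Ioc hr.le hr1.le).symm
    rw [hsplit, lintegral_union measurableSet_Ioc (Set.Ioc_disjoint_Ioc_of_le le_rfl)]
    have hpart1 : ∫⁻ t in Set.Ioc (0:ℝ) r, min M (ENNReal.ofReal (t⁻¹ ^ d) * V) ≤ A := by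
      calc ∫⁻ t in Set.Ioc (0:ℝ) r, min M (ENNReal.ofReal (t⁻¹ ^ d) * V)
          ≤ ∫⁻ _ in Set.Ioc (0:ℝ) r, M := lintegral_mono fun t => min_le_left _ _
        _ = M * volume (Set.Ioc (0:ℝ) r) := setLIntegral_const _ _
        _ = M * ENNReal.ofReal r := by rw [Real.volume_Ioc, sub_zero]
        _ ≤ A := hMr
    have hpart2 : ∫⁻ t in Set.Ioc r 1, min M (ENNReal.ofReal (t⁻¹ ^ d) * V) ≤ A := by
      have hint : IntegrableOn (fun t : ℝ => t⁻¹ ^ d) (Set.Ioc r 1) volume := by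
        apply IntegrableOn.mono_set _ Set.Ioc_subset_Icc_self
        apply ContinuousOn.integrableOn_Icc
        intro t ht
        have : t ≠ 0 := by
          have := ht.1; dsimp at *; nlinarith [hr]
        exact ((continuousOn_inv₀.continuousAt (IsOpen.mem_nhds isOpen_compl_singleton this)).pow d).continuousWithinAt
      have hnn : 0 ≤ᵐ[volume.restrict (Set.Ioc r 1)] fun t : ℝ => t⁻¹ ^ d := by
        refine (ae_restrict_iff' measurableSet_Ioc).mpr (ae_of_all _ fun t ht => ?_)
        have h0 : 0 < t := lt_trans hr ht.1
        positivity
      have hE : ∫⁻ t in Set.Ioc r 1, ENNReal.ofReal (t⁻¹ ^ d) =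
          ENNReal.ofReal (∫ t in Set.Ioc r 1, t⁻¹ ^ d) :=
        (ofReal_integral_eq_lintegral_ofReal hint hnn).symm
      have hval : ∫ t in Set.Ioc r 1, t⁻¹ ^ d ≤ r ^ ((1:ℝ) - d) := by
        have heq : ∫ t in Set.Ioc r 1, t⁻¹ ^ d = ∫ t in r..1, t ^ (-(d:ℤ)) := by
          rw [intervalIntegral.integral_of_le hr1.le]
          refine setIntegral_congr_fun measurableSet_Ioc fun t ht => ?_
          rw [zpow_neg, zpow_natCast, inv_pow]
        rw [heq, integral_zpow]
        · have h1 : ((1:ℝ)) ^ (-(d:ℤ) + 1) = 1 := one_zpow _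
          rw [h1]
          have hrz : r ^ (-(d:ℤ) + 1) = r ^ ((1:ℝ) - d) := by
            rw [← Real.rpow_intCast r (-(d:ℤ) + 1)]
            congr 1
            push_cast; ring
          rw [hrz]
          set x := r ^ ((1:ℝ) - d) with hx_def
          have hx : 0 < x := Real.rpow_pos_of_pos hr _
          rw [show ((-(d:ℤ) : ℤ):ℝ) + 1 = 1 - (d:ℝ) by push_cast; ring]
          rw [div_le_iff_of_neg (by linarith : (1:ℝ) - d < 0)]
          nlinarith
        · refine Or.inr ⟨by omega, ?_⟩
          rw [Set.uIcc_of_le hr1.le]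
          intro h
          exact absurd h.1 (not_le.mpr hr)
      calc ∫⁻ t in Set.Ioc r 1, min M (ENNReal.ofReal (t⁻¹ ^ d) * V)
          ≤ ∫⁻ t in Set.Ioc r 1, ENNReal.ofReal (t⁻¹ ^ d) * V :=
            lintegral_mono fun t => min_le_right _ _
        _ = (∫⁻ t in Set.Ioc r 1, ENNReal.ofReal (t⁻¹ ^ d)) * V :=
            lintegral_mul_const' V _ hV
        _ ≤ ENNReal.ofReal (r ^ ((1:ℝ) - d)) * V := by
            rw [hE]
            exact mul_le_mul_left (ENNReal.ofReal_le_ofReal hval) _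
        _ = V * ENNReal.ofReal (r ^ ((1:ℝ) - d)) := mul_comm _ _
        _ ≤ A := hVr
    calc _ ≤ A + A := add_le_add hpart1 hpart2
      _ = 2 * A := (two_mul A).symm

lemma ftc_bound {d : ℕ} {R : ℝ} {f : EuclideanSpace ℝ (Fin d) → ℝ}
    (hf : ContDiff ℝ 1 f) (hf0 : f 0 = 0)
    (x : EuclideanSpace ℝ (Fin d)) (hx : ‖x‖ ≤ R) :
    |f x| ≤ R * ∫ t in (0:ℝ)..1, ‖fderiv ℝ f (t • x)‖ := by
  have hderiv : ∀ t : ℝ, HasDerivAt (fun t : ℝ => f (t • x)) ((fderiv ℝ f (t • x)) x) t := by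
    intro t
    have h1 : HasFDerivAt f (fderiv ℝ f (t • x)) (t • x) :=
      (hf.differentiable one_ne_zero _).hasFDerivAt
    have h2 : HasDerivAt (fun t : ℝ => t • x) x t := by
      simpa using (hasDerivAt_id t).smul_const x
    exact h1.comp_hasDerivAt t h2
  have hcont : Continuous fun t : ℝ => (fderiv ℝ f (t • x)) x :=
    ((hf.continuous_fderiv one_ne_zero).comp (continuous_id.smul continuous_const)).clm_apply
      continuous_const
  have hcontn : Continuous fun t : ℝ => ‖fderiv ℝ f (t • x)‖ :=
    ((hf.continuous_fderiv one_ne_zero).comp (continuous_id.smul continuous_const)).norm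
  have key : ∫ t in (0:ℝ)..1, (fderiv ℝ f (t • x)) x = f x - f 0 := by
    have := intervalIntegral.integral_eq_sub_of_hasDerivAt
      (fun t _ => hderiv t) (hcont.intervalIntegrable 0 1)
    simpa using this
  have h1 : f x = ∫ t in (0:ℝ)..1, (fderiv ℝ f (t • x)) x := by
    rw [key, hf0, sub_zero]
  rw [h1]
  calc |∫ t in (0:ℝ)..1, (fderiv ℝ f (t • x)) x|
      ≤ ∫ t in (0:ℝ)..1, ‖(fderiv ℝ f (t • x)) x‖ := by
        rw [← Real.norm_eq_abs]
        exact intervalIntegral.norm_integral_le_integral_norm zero_le_one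
    _ ≤ ∫ t in (0:ℝ)..1, ‖fderiv ℝ f (t • x)‖ * R := by
        apply intervalIntegral.integral_mono_on zero_le_one
          (hcont.norm.intervalIntegrable 0 1) ((hcontn.mul continuous_const).intervalIntegrable 0 1)
        intro t _
        calc ‖(fderiv ℝ f (t • x)) x‖ ≤ ‖fderiv ℝ f (t • x)‖ * ‖x‖ :=
              (fderiv ℝ f (t • x)).le_opNorm x
          _ ≤ ‖fderiv ℝ f (t • x)‖ * R := by
              exact mul_le_mul_of_nonneg_left hx (norm_nonneg _)
    _ = R * ∫ t in (0:ℝ)..1, ‖fderiv ℝ f (t • x)‖ := by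
        rw [← intervalIntegral.integral_const_mul]
        simp_rw [mul_comm]

theorem stmt1 (d : ℕ) (hd : 2 ≤ d) :
    ∃ c : ℝ, 0 < c ∧
      ∀ (R : ℝ), 0 < R →
      ∀ (μ : Measure (EuclideanSpace ℝ (Fin d))),
        μ (Metric.closedBall (0 : EuclideanSpace ℝ (Fin d)) R)ᶜ = 0 →
        (∀ A : Set (EuclideanSpace ℝ (Fin d)), MeasurableSet A → μ A ≤ volume A) →
      ∀ (f : EuclideanSpace ℝ (Fin d) → ℝ), ContDiff ℝ 1 f → f 0 = 0 →
        |∫ x, f x ∂μ| ≤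
          c * R * (μ Set.univ).toReal ^ (((d : ℝ) - 1) / d) *
            lorentzNorm d (fun x => ‖fderiv ℝ f x‖)
              (Metric.closedBall (0 : EuclideanSpace ℝ (Fin d)) R) := by
  refine ⟨2, two_pos, ?_⟩
  intro R hR μ hμc hμle f hf hf0
  have hd0 : (0:ℝ) < d := by positivity
  have hdR : (1:ℝ) ≤ d := by exact_mod_cast le_trans one_le_two hd
  set B := Metric.closedBall (0 : EuclideanSpace ℝ (Fin d)) R with hB_def
  have hBmeas : MeasurableSet B := measurableSet_closedBall
  have hBvol : volume B ≠ ∞ := measure_closedBall_lt_top.ne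
  have hμB : μ Set.univ ≤ μ B := by
    have h1 : μ Set.univ ≤ μ B + μ Bᶜ := measure_univ_le_add_compl B
    rwa [hμc, add_zero] at h1
  have hμfin : μ Set.univ ≠ ∞ :=
    ((hμB.trans (hμle B hBmeas)).trans_lt measure_closedBall_lt_top).ne
  haveI : IsFiniteMeasure μ := ⟨lt_top_iff_ne_top.mpr hμfin⟩
  set M := μ Set.univ with hM_def
  set G : EuclideanSpace ℝ (Fin d) → ℝ := fun y => ‖fderiv ℝ f y‖ with hG_def
  have hGcont : Continuous G := (hf.continuous_fderiv one_ne_zero).norm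
  have hGnn : ∀ y, 0 ≤ G y := fun y => norm_nonneg _
  set V : ℝ → ℝ≥0∞ := fun s => volume {y ∈ B | s ≤ G y} with hV_def
  have hVmeas : Measurable V := by
    apply Antitone.measurable
    intro s s' hss'
    exact measure_mono fun y hy => ⟨hy.1, le_trans hss' hy.2⟩
  have hVfin : ∀ s, V s ≠ ∞ := fun s =>
    ((measure_mono (fun y (hy : y ∈ B ∧ s ≤ G y) => hy.1)).trans_lt
      measure_closedBall_lt_top).ne
  set a := ((d:ℝ)-1)/d with ha_def
  have ha_nn : 0 ≤ a := by
    apply div_nonneg _ hd0.le; linarith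
  set L := ∫⁻ s in Set.Ioi (0:ℝ), (V s) ^ ((1:ℝ)/d) with hL_def
  -- Step A : reduce to lintegral
  have hstepA : |∫ x, f x ∂μ| ≤ (∫⁻ x, ENNReal.ofReal |f x| ∂μ).toReal := by
    have h2 : ∀ x : EuclideanSpace ℝ (Fin d), (‖f x‖₊ : ℝ≥0∞) = ENNReal.ofReal |f x| :=
      fun x => by rw [← enorm_eq_nnnorm, ← ofReal_norm, Real.norm_eq_abs]
    calc |∫ x, f x ∂μ| = ‖∫ x, f x ∂μ‖ := (Real.norm_eq_abs _).symm
      _ ≤ (∫⁻ x, ENNReal.ofReal ‖f x‖ ∂μ).toReal := norm_integral_le_lintegral_norm f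
      _ = (∫⁻ x, ENNReal.ofReal |f x| ∂μ).toReal := by simp_rw [Real.norm_eq_abs]
  -- pointwise FTC bound
  have hptw : ∀ x ∈ B, ENNReal.ofReal |f x| ≤
      ENNReal.ofReal R * ∫⁻ t in Set.Ioc (0:ℝ) 1, ENNReal.ofReal (G (t • x)) := by
    intro x hx
    have hx' : ‖x‖ ≤ R := by rwa [hB_def, mem_closedBall_zero_iff] at hx
    have h1 := ftc_bound hf hf0 x hx'
    have hcont : Continuous fun t : ℝ => G (t • x) :=
      hGcont.comp (continuous_id.smul continuous_const)
    have h2 : ∫ t in (0:ℝ)..1, G (t • x) = ∫ t in Set.Ioc (0:ℝ) 1, G (t • x) :=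
      intervalIntegral.integral_of_le zero_le_one
    have h3 : ENNReal.ofReal (∫ t in Set.Ioc (0:ℝ) 1, G (t • x)) =
        ∫⁻ t in Set.Ioc (0:ℝ) 1, ENNReal.ofReal (G (t • x)) :=
      ofReal_integral_eq_lintegral_ofReal
        ((hcont.integrableOn_Icc).mono_set Set.Ioc_subset_Icc_self)
        (ae_of_all _ fun t => hGnn _)
    calc ENNReal.ofReal |f x|
        ≤ ENNReal.ofReal (R * ∫ t in (0:ℝ)..1, G (t • x)) := ENNReal.ofReal_le_ofReal h1
      _ = ENNReal.ofReal R * ENNReal.ofReal (∫ t in (0:ℝ)..1, G (t • x)) :=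
          ENNReal.ofReal_mul hR.le
      _ = _ := by rw [h2, h3]
  -- main chain
  have main : ∫⁻ x, ENNReal.ofReal |f x| ∂μ ≤ ENNReal.ofReal R * (2 * M ^ a * L) := by
    have hsplit : ∫⁻ x, ENNReal.ofReal |f x| ∂μ = ∫⁻ x in B, ENNReal.ofReal |f x| ∂μ := by
      rw [← lintegral_add_compl (fun x => ENNReal.ofReal |f x|) hBmeas,
        setLIntegral_measure_zero _ _ hμc, add_zero]
    calc ∫⁻ x, ENNReal.ofReal |f x| ∂μ
        = ∫⁻ x in B, ENNReal.ofReal |f x| ∂μ := hsplit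
      _ ≤ ∫⁻ x in B, (ENNReal.ofReal R *
            ∫⁻ t in Set.Ioc (0:ℝ) 1, ENNReal.ofReal (G (t • x))) ∂μ :=
          lintegral_mono_ae ((ae_restrict_iff' hBmeas).mpr (ae_of_all _ hptw))
      _ = ENNReal.ofReal R * ∫⁻ x in B,
            (∫⁻ t in Set.Ioc (0:ℝ) 1, ENNReal.ofReal (G (t • x))) ∂μ :=
          lintegral_const_mul' _ _ ENNReal.ofReal_ne_top
      _ = ENNReal.ofReal R * ∫⁻ t in Set.Ioc (0:ℝ) 1,
            (∫⁻ x in B, ENNReal.ofReal (G (t • x)) ∂μ) := by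
          congr 1
          apply lintegral_lintegral_swap
          exact (ENNReal.continuous_ofReal.comp
            (hGcont.comp (continuous_snd.smul continuous_fst))).measurable.aemeasurable
      _ ≤ ENNReal.ofReal R * ∫⁻ t in Set.Ioc (0:ℝ) 1,
            ∫⁻ s in Set.Ioi (0:ℝ), min M (ENNReal.ofReal (t⁻¹ ^ d) * V s) := by
          refine mul_le_mul_right ?_ _
          refine lintegral_mono_ae ((ae_restrict_iff' measurableSet_Ioc).mpr
            (ae_of_all _ ?_))
          intro t ht
          have hct : Continuous fun x => G (t • x) :=
            hGcont.comp (continuous_const_smul t)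
          have lc := lintegral_eq_lintegral_meas_le (μ.restrict B)
            (ae_of_all _ fun x => hGnn (t • x)) hct.aemeasurable
          rw [lc]
          apply lintegral_mono
          intro s
          show (μ.restrict B) {x | s ≤ G (t • x)} ≤ _
          refine le_min ?_ ?_
          · exact le_trans ((Measure.restrict_le_self) _) (measure_mono (Set.subset_univ _))
          · have hsm : MeasurableSet {x : EuclideanSpace ℝ (Fin d) | s ≤ G (t • x)} :=
              measurableSet_le measurable_const hct.measurable
            rw [Measure.restrict_apply hsm]
            refine le_trans (hμle _ (hsm.inter hBmeas)) ?_
            have hsub : {x : EuclideanSpace ℝ (Fin d) | s ≤ G (t • x)} ∩ B ⊆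
                t⁻¹ • {y ∈ B | s ≤ G y} := by
              rintro x ⟨hxs, hxB⟩
              refine Set.mem_smul_set.mpr ⟨t • x, ⟨?_, hxs⟩, ?_⟩
              · rw [hB_def, mem_closedBall_zero_iff] at hxB ⊢
                rw [norm_smul]
                calc ‖t‖ * ‖x‖ ≤ 1 * R := by
                      apply mul_le_mul _ hxB (norm_nonneg _) zero_le_one
                      rw [Real.norm_eq_abs, abs_of_pos ht.1]
                      exact ht.2
                  _ = R := one_mul R
              · rw [smul_smul, inv_mul_cancel₀ (ne_of_gt ht.1), one_smul]
            refine le_trans (measure_mono hsub) ?_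
            rw [MeasureTheory.Measure.addHaar_smul_of_nonneg volume
              (inv_nonneg.mpr ht.1.le), finrank_euclideanSpace_fin]
      _ = ENNReal.ofReal R * ∫⁻ s in Set.Ioi (0:ℝ),
            ∫⁻ t in Set.Ioc (0:ℝ) 1, min M (ENNReal.ofReal (t⁻¹ ^ d) * V s) := by
          congr 1
          apply lintegral_lintegral_swap
          apply Measurable.aemeasurable
          exact Measurable.min measurable_const
            ((ENNReal.measurable_ofReal.comp ((measurable_fst.inv).pow_const d)).mul
              (hVmeas.comp measurable_snd))
      _ ≤ ENNReal.ofReal R * ∫⁻ s in Set.Ioi (0:ℝ), 2 * M ^ a * (V s) ^ ((1:ℝ)/d) := by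
          exact mul_le_mul_right
            (lintegral_mono fun s => key1d d hd M (V s) hμfin (hVfin s)) _
      _ = ENNReal.ofReal R * (2 * M ^ a * L) := by
          rw [lintegral_const_mul' _ _
            (ENNReal.mul_ne_top (by norm_num) (ENNReal.rpow_ne_top_of_nonneg ha_nn hμfin))]
  -- finiteness of L
  have hLfin : L ≠ ∞ := by
    obtain ⟨x₀, hx₀B, hx₀'⟩ := (isCompact_closedBall (0 : EuclideanSpace ℝ (Fin d)) R).exists_isMaxOn
      ⟨0, mem_closedBall_self hR.le⟩ hGcont.continuousOn
    have hx₀ : ∀ y ∈ B, G y ≤ G x₀ := fun y hy => hx₀' hy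
    set K := max (G x₀) 1 with hK
    have hK0 : (0:ℝ) < K := lt_of_lt_of_le one_pos (le_max_right _ _)
    have hVz : ∀ s ∈ Set.Ioi K, (V s) ^ ((1:ℝ)/d) = (0:ℝ≥0∞) := by
      intro s hs
      have hemp : {y ∈ B | s ≤ G y} = ∅ := by
        ext y
        simp only [Set.mem_setOf_eq, Set.mem_empty_iff_false, iff_false, not_and, not_le]
        intro hyB
        calc G y ≤ G x₀ := hx₀ y hyB
          _ ≤ K := le_max_left _ _
          _ < s := hs
      have : V s = 0 := by rw [hV_def]; simp only [hemp, measure_empty]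
      rw [this, ENNReal.zero_rpow_of_pos (by positivity)]
    rw [hL_def, ← Set.Ioc_union_Ioi_eq_Ioi hK0.le,
      lintegral_union measurableSet_Ioi Set.Ioc_disjoint_Ioi_same]
    apply ENNReal.add_ne_top.mpr
    constructor
    · have hb : ∫⁻ s in Set.Ioc (0:ℝ) K, (V s) ^ ((1:ℝ)/d) ≤
          ∫⁻ _ in Set.Ioc (0:ℝ) K, (volume B) ^ ((1:ℝ)/d) :=
        lintegral_mono fun s => ENNReal.rpow_le_rpow
          (measure_mono fun y (hy : y ∈ B ∧ s ≤ G y) => hy.1) (by positivity)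
      refine ne_top_of_le_ne_top ?_ hb
      rw [setLIntegral_const]
      exact ENNReal.mul_ne_top (ENNReal.rpow_ne_top_of_nonneg (by positivity) hBvol)
        (by simp [Real.volume_Ioc])
    · rw [setLIntegral_congr_fun measurableSet_Ioi hVz]
      simp
  -- Lorentz norm identity
  have hlor : lorentzNorm d G B = d * L.toReal := by
    rw [lorentzNorm, hL_def]
    congr 1
    have habs : ∀ s : ℝ, {x ∈ B | s ≤ |G x|} = {x ∈ B | s ≤ G x} := by
      intro s
      ext x
      simp [abs_of_nonneg (hGnn x)]
    simp_rw [habs]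
    rw [← integral_toReal ((hVmeas.pow_const _).aemeasurable)
      (ae_of_all _ fun s => ENNReal.rpow_lt_top_of_nonneg (by positivity) (hVfin s))]
    congr 1
    ext s
    rw [← ENNReal.toReal_rpow]
  -- final assembly
  have hRHSne : ENNReal.ofReal R * (2 * M ^ a * L) ≠ ∞ :=
    ENNReal.mul_ne_top ENNReal.ofReal_ne_top
      (ENNReal.mul_ne_top
        (ENNReal.mul_ne_top (by norm_num) (ENNReal.rpow_ne_top_of_nonneg ha_nn hμfin)) hLfin)
  calc |∫ x, f x ∂μ| ≤ (∫⁻ x, ENNReal.ofReal |f x| ∂μ).toReal := hstepA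
    _ ≤ (ENNReal.ofReal R * (2 * M ^ a * L)).toReal := ENNReal.toReal_mono hRHSne main
    _ = R * (2 * M.toReal ^ a * L.toReal) := by
        rw [ENNReal.toReal_mul, ENNReal.toReal_mul, ENNReal.toReal_mul,
          ENNReal.toReal_ofReal hR.le, ← ENNReal.toReal_rpow]
        norm_num
    _ ≤ 2 * R * M.toReal ^ a * (d * L.toReal) := by
        have h1 : R * (2 * M.toReal ^ a * L.toReal) = 2 * R * M.toReal ^ a * L.toReal := by ring
        rw [h1]
        apply mul_le_mul_of_nonneg_left _ (by positivity)
        exact le_mul_of_one_le_left ENNReal.toReal_nonneg hdR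
    _ = 2 * R * M.toReal ^ a * lorentzNorm d G B := by rw [hlor]
end
end

section
/- Let d ≥ 1, let x_1, …, x_N ∈ [0,1]^d, and let W > 0 be an ∞-transport bound for the pair (μ_N, Lebesgue measure restricted to [0,1]^d), where μ_N = (1/N)∑_{k=1}^N δ_{x_k}. Then there is a constant c_d > 0 depending only on d (one may take c_d = 2^d times the volume of the unit ball) such that for every x ∈ [0,1]^d, the number of indices i with ‖x_i − x‖ ≤ W is at most c_d · W^d · N. -/
open MeasureTheory Metric
open scoped ENNReal

noncomputable section

/-- The closed unit cube `[0,1]^d` in `ℝ^d`. -/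
def unitCube (d : ℕ) : Set (EuclideanSpace ℝ (Fin d)) :=
  {x | ∀ i, x i ∈ Set.Icc (0 : ℝ) 1}

/-- The empirical measure `(1/N) ∑ δ_{x k}`. -/
def empiricalMeasure (d N : ℕ) (x : Fin N → EuclideanSpace ℝ (Fin d)) :
    Measure (EuclideanSpace ℝ (Fin d)) :=
  ((N : ℝ≥0∞))⁻¹ • ∑ k, MeasureTheory.Measure.dirac (x k)

/-- `W` is an `∞`-transport bound for `(μ, ν)`: there is a coupling of `μ` and `ν`
which moves no mass further than `W`. -/
def IsInfTransportBound {d : ℕ} (μ ν : Measure (EuclideanSpace ℝ (Fin d))) (W : ℝ) : Prop :=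
  ∃ π : Measure (EuclideanSpace ℝ (Fin d) × EuclideanSpace ℝ (Fin d)),
    π.map Prod.fst = μ ∧ π.map Prod.snd = ν ∧ π {p | W < dist p.1 p.2} = 0
theorem stmt3 (d : ℕ) (hd : 1 ≤ d) :
    ∃ c : ℝ, 0 < c ∧
      c = 2 ^ d * (volume (Metric.closedBall (0 : EuclideanSpace ℝ (Fin d)) 1)).toReal ∧
      ∀ (N : ℕ), 0 < N →
      ∀ (x : Fin N → EuclideanSpace ℝ (Fin d)), (∀ k, x k ∈ unitCube d) →
      ∀ (W : ℝ), 0 < W →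
      IsInfTransportBound (empiricalMeasure d N x) (volume.restrict (unitCube d)) W →
      ∀ y ∈ unitCube d,
        ((Finset.univ.filter fun i => dist (x i) y ≤ W).card : ℝ) ≤ c * W ^ d * N := by
  haveI : Nonempty (Fin d) := ⟨⟨0, hd⟩⟩
  set V : ℝ≥0∞ := volume (Metric.closedBall (0 : EuclideanSpace ℝ (Fin d)) 1) with hV
  have hVpos : 0 < V := measure_closedBall_pos volume 0 one_pos
  have hVlt : V < ⊤ := measure_closedBall_lt_top
  have hVtr : 0 < V.toReal := ENNReal.toReal_pos hVpos.ne' hVlt.ne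
  refine ⟨2 ^ d * V.toReal, by positivity, rfl, ?_⟩
  intro N hN x hx W hW hT y hy
  obtain ⟨π, hfst, hsnd, hπ⟩ := hT
  have hWm : MeasurableSet (Metric.closedBall y W) := measurableSet_closedBall
  have key1 : empiricalMeasure d N x (Metric.closedBall y W)
      = (N : ℝ≥0∞)⁻¹ * (Finset.univ.filter fun i => dist (x i) y ≤ W).card := by
    classical
    simp only [empiricalMeasure, Measure.smul_apply, smul_eq_mul, Measure.finset_sum_apply,
      Measure.dirac_apply' _ hWm]
    congr 1
    rw [show (fun k => (Metric.closedBall y W).indicator (1 : EuclideanSpace ℝ (Fin d) → ℝ≥0∞) (x k))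
        = fun k => if dist (x k) y ≤ W then 1 else 0 from
      funext fun k => by simp [Set.indicator_apply, mem_closedBall]]
    rw [Finset.sum_boole]
  -- transport step
  have incl : (Prod.fst ⁻¹' Metric.closedBall y W : Set (EuclideanSpace ℝ (Fin d) × EuclideanSpace ℝ (Fin d)))
      ⊆ {p | W < dist p.1 p.2} ∪ Prod.snd ⁻¹' Metric.closedBall y (2 * W) := by
    intro p hp
    by_cases h : W < dist p.1 p.2
    · exact Or.inl h
    · refine Or.inr ?_
      simp only [Set.mem_preimage, mem_closedBall] at hp ⊢
      calc dist p.2 y ≤ dist p.2 p.1 + dist p.1 y := dist_triangle _ _ _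
        _ ≤ W + W := add_le_add (by rwa [dist_comm, not_lt] at h) hp
        _ = 2 * W := by ring
  have step : empiricalMeasure d N x (Metric.closedBall y W)
      ≤ volume (Metric.closedBall y (2 * W)) := by
    rw [← hfst, Measure.map_apply measurable_fst hWm]
    calc π (Prod.fst ⁻¹' Metric.closedBall y W)
        ≤ π ({p | W < dist p.1 p.2} ∪ Prod.snd ⁻¹' Metric.closedBall y (2 * W)) :=
          measure_mono incl
      _ ≤ π {p | W < dist p.1 p.2} + π (Prod.snd ⁻¹' Metric.closedBall y (2 * W)) :=
          measure_union_le _ _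
      _ = π (Prod.snd ⁻¹' Metric.closedBall y (2 * W)) := by rw [hπ, zero_add]
      _ = (π.map Prod.snd) (Metric.closedBall y (2 * W)) :=
          (Measure.map_apply measurable_snd measurableSet_closedBall).symm
      _ = (volume.restrict (unitCube d)) (Metric.closedBall y (2 * W)) := by rw [hsnd]
      _ ≤ volume (Metric.closedBall y (2 * W)) := Measure.restrict_le_self _
  have hball : volume (Metric.closedBall y (2 * W))
      = ENNReal.ofReal ((2 * W) ^ d) * V := by
    have := Measure.addHaar_closedBall' (volume : Measure (EuclideanSpace ℝ (Fin d))) y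
      (by positivity : (0:ℝ) ≤ 2 * W)
    rwa [finrank_euclideanSpace_fin] at this
  -- combine in ℝ≥0∞
  have main : ((Finset.univ.filter fun i => dist (x i) y ≤ W).card : ℝ≥0∞)
      ≤ (N : ℝ≥0∞) * (ENNReal.ofReal ((2 * W) ^ d) * V) := by
    have hN0 : (N : ℝ≥0∞) ≠ 0 := by exact_mod_cast hN.ne'
    have hNt : (N : ℝ≥0∞) ≠ ⊤ := ENNReal.natCast_ne_top N
    have := step
    rw [key1, hball] at this
    calc ((Finset.univ.filter fun i => dist (x i) y ≤ W).card : ℝ≥0∞)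
        = (N : ℝ≥0∞) * ((N : ℝ≥0∞)⁻¹ * (Finset.univ.filter fun i => dist (x i) y ≤ W).card) := by
          rw [← mul_assoc, ENNReal.mul_inv_cancel hN0 hNt, one_mul]
      _ ≤ (N : ℝ≥0∞) * (ENNReal.ofReal ((2 * W) ^ d) * V) := by
          exact mul_le_mul_right this _
  -- pass to ℝ
  have hfin : (N : ℝ≥0∞) * (ENNReal.ofReal ((2 * W) ^ d) * V) ≠ ⊤ :=
    ENNReal.mul_ne_top (ENNReal.natCast_ne_top N)
      (ENNReal.mul_ne_top ENNReal.ofReal_ne_top hVlt.ne)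
  have := ENNReal.toReal_mono hfin main
  rw [ENNReal.toReal_natCast] at this
  rw [ENNReal.toReal_mul, ENNReal.toReal_mul, ENNReal.toReal_natCast,
    ENNReal.toReal_ofReal (by positivity)] at this
  calc ((Finset.univ.filter fun i => dist (x i) y ≤ W).card : ℝ)
      ≤ (N : ℝ) * ((2 * W) ^ d * V.toReal) := this
    _ = 2 ^ d * V.toReal * W ^ d * N := by rw [mul_pow]; ring
end
end

section
/- Let d ≥ 2 and r > 0, and let B = B(0,r) be the closed ball of radius r around the origin in ℝ^d. Then there is a constant c_d > 0 depending only on d such that for every continuously differentiable f : ℝ^d → ℝ with f(0) = 0, |∫_{B(0,r)} f(x) dx| ≤ c_d · r^d · ‖∇f‖_{L^∞(B)}^{(d−1)/d} · ‖∇f‖_{L^1(B)}^{1/d}. -/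
open MeasureTheory Metric Set
open scoped ENNReal Pointwise

noncomputable section

set_option maxHeartbeats 1000000 in
theorem stmt5 (d : ℕ) (hd : 2 ≤ d) :
    ∃ c : ℝ, 0 < c ∧
      ∀ (r : ℝ), 0 < r →
      ∀ (f : EuclideanSpace ℝ (Fin d) → ℝ), ContDiff ℝ 1 f → f 0 = 0 →
        |∫ x in Metric.closedBall (0 : EuclideanSpace ℝ (Fin d)) r, f x| ≤
          c * r ^ d *
            (⨆ x ∈ Metric.closedBall (0 : EuclideanSpace ℝ (Fin d)) r,
                ‖fderiv ℝ f x‖) ^ (((d : ℝ) - 1) / d) *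
            (∫ x in Metric.closedBall (0 : EuclideanSpace ℝ (Fin d)) r,
                ‖fderiv ℝ f x‖) ^ ((1 : ℝ) / d) := by
  obtain ⟨e, rfl⟩ : ∃ e, d = e + 2 := ⟨d - 2, by omega⟩
  set d := e + 2 with hd2
  have hdne : (d : ℝ) ≠ 0 := by positivity
  have hfin : Module.finrank ℝ (EuclideanSpace ℝ (Fin d)) = d := finrank_euclideanSpace_fin
  set ω : ℝ := (volume (closedBall (0 : EuclideanSpace ℝ (Fin d)) 1)).toReal with hωdef
  have hω0 : 0 < ω := by
    refine ENNReal.toReal_pos ?_ measure_closedBall_lt_top.ne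
    refine ne_of_gt (lt_of_lt_of_le ?_ (measure_mono ball_subset_closedBall))
    exact Metric.measure_ball_pos volume 0 one_pos
  refine ⟨3 * (ω + 1), by positivity, ?_⟩
  intro r hr f hf hf0
  set B : Set (EuclideanSpace ℝ (Fin d)) := closedBall 0 r with hBdef
  have hBc : IsCompact B := isCompact_closedBall _ _
  have hBm : MeasurableSet B := measurableSet_closedBall
  have hconv : Convex ℝ B := convex_closedBall _ _
  have hfc : Continuous f := hf.continuous
  have hdf : Differentiable ℝ f := hf.differentiable one_ne_zero
  have hgc : Continuous fun x : EuclideanSpace ℝ (Fin d) => ‖fderiv ℝ f x‖ :=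
    (hf.continuous_fderiv one_ne_zero).norm
  set M : ℝ := ⨆ x ∈ B, ‖fderiv ℝ f x‖ with hMdef
  set I : ℝ := ∫ x in B, ‖fderiv ℝ f x‖ with hIdef
  have hbdd : BddAbove ((fun x => ‖fderiv ℝ f x‖) '' B) := (hBc.image hgc).bddAbove
  have hbdd' : BddAbove (Set.range fun x : B => ‖fderiv ℝ f (x : EuclideanSpace ℝ (Fin d))‖) := by
    obtain ⟨b, hb⟩ := hbdd
    refine ⟨b, ?_⟩
    rintro y ⟨x, rfl⟩
    exact hb ⟨x, x.2, rfl⟩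
  have hBne : (0 : EuclideanSpace ℝ (Fin d)) ∈ B := mem_closedBall_self hr.le
  have hMsub : M = ⨆ x : B, ‖fderiv ℝ f (x : EuclideanSpace ℝ (Fin d))‖ := by
    rw [hMdef]
    refine (ciSup_subtype'' hbdd' ?_).symm
    rw [Real.sSup_empty]
    exact le_trans (norm_nonneg _) (le_ciSup hbdd' ⟨0, hBne⟩)
  have hM : ∀ x ∈ B, ‖fderiv ℝ f x‖ ≤ M := by
    intro x hx
    rw [hMsub]
    exact le_ciSup_set hbdd hx
  have hM0 : 0 ≤ M := le_trans (norm_nonneg _) (hM 0 (mem_closedBall_self hr.le))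
  have hgint : IntegrableOn (fun x => ‖fderiv ℝ f x‖) B := by
    exact hgc.continuousOn.integrableOn_compact hBc
  have hI0 : 0 ≤ I := setIntegral_nonneg hBm fun x _ => norm_nonneg _
  have hvol : ∀ ρ : ℝ, 0 ≤ ρ →
      (volume (closedBall (0 : EuclideanSpace ℝ (Fin d)) ρ)).toReal = ω * ρ ^ d := by
    intro ρ hρ
    rw [Measure.addHaar_closedBall' volume 0 hρ, hfin, ENNReal.toReal_mul,
      ENNReal.toReal_ofReal (by positivity)]
    ring
  have hIle : I ≤ M * (ω * r ^ d) := by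
    have h1 : I ≤ ∫ _x in B, M := by
      refine setIntegral_mono_on hgint ?_ hBm hM
      exact integrableOn_const hBc.measure_lt_top.ne
    have h2 : (∫ _x in B, M : ℝ) = (volume B).toReal * M := by
      rw [setIntegral_const, smul_eq_mul, measureReal_def]
    rw [h2, hBdef, hvol r hr.le] at h1
    calc I ≤ ω * r ^ d * M := h1
    _ = M * (ω * r ^ d) := by ring
  have hfb : ∀ y ∈ B, |f y| ≤ M * ‖y‖ := by
    intro y hy
    have := hconv.norm_image_sub_le_of_norm_fderiv_le (fun x _ => hdf x) hM
      (mem_closedBall_self hr.le) hy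
    simpa [hf0, Real.norm_eq_abs] using this
  -- key estimate
  have key : ∀ t₀ : ℝ, 0 < t₀ → t₀ ≤ 1 →
      |∫ x in B, f x| ≤ ω * M * r ^ (d + 1) * t₀
        + r * I * t₀ ^ (1 - (d : ℤ)) / ((d : ℝ) - 1) := by
    intro t₀ ht0 ht1
    have hd1 : (1 : ℝ) ≤ (d : ℝ) - 1 := by
      have : (2 : ℝ) ≤ (d : ℕ) := by exact_mod_cast hd
      linarith
    have ht0r : (0:ℝ) ≤ t₀ * r := by positivity
    have hsub : closedBall (0 : EuclideanSpace ℝ (Fin d)) (t₀ * r) ⊆ B := by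
      rw [hBdef]
      exact closedBall_subset_closedBall (by nlinarith)
    have hsmulB : ∀ t : ℝ, 0 < t → t • B = closedBall (0 : EuclideanSpace ℝ (Fin d)) (t * r) := by
      intro t ht
      rw [hBdef, smul_closedBall _ _ hr.le, smul_zero, Real.norm_eq_abs, abs_of_pos ht]
    have hfB : IntegrableOn f B := hfc.continuousOn.integrableOn_compact hBc
    have hfcomp : IntegrableOn (fun x => f (t₀ • x)) B :=
      (hfc.comp (continuous_const_smul t₀)).continuousOn.integrableOn_compact hBc
    -- piece 2 : the rescaled integral
    have p2 : |∫ x in B, f (t₀ • x)| ≤ ω * M * r ^ (d + 1) * t₀ := by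
      rw [Measure.setIntegral_comp_smul_of_pos volume f B ht0, hfin, hsmulB t₀ ht0, smul_eq_mul, abs_mul,
        abs_of_nonneg (inv_nonneg.2 (pow_nonneg ht0.le d))]
      have hfint2 : IntegrableOn f (closedBall (0 : EuclideanSpace ℝ (Fin d)) (t₀ * r)) :=
        hfc.continuousOn.integrableOn_compact (isCompact_closedBall _ _)
      have habs : |∫ x in closedBall (0 : EuclideanSpace ℝ (Fin d)) (t₀ * r), f x|
          ≤ M * (t₀ * r) * (ω * (t₀ * r) ^ d) := by
        calc |∫ x in closedBall (0 : EuclideanSpace ℝ (Fin d)) (t₀ * r), f x|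
            ≤ ∫ x in closedBall (0 : EuclideanSpace ℝ (Fin d)) (t₀ * r), |f x| := by
              simpa [Real.norm_eq_abs] using
                norm_integral_le_integral_norm
                  (μ := volume.restrict (closedBall (0 : EuclideanSpace ℝ (Fin d)) (t₀ * r))) f
          _ ≤ ∫ _x in closedBall (0 : EuclideanSpace ℝ (Fin d)) (t₀ * r), M * (t₀ * r) := by
              refine setIntegral_mono_on hfint2.abs
                (integrableOn_const (isCompact_closedBall _ _).measure_lt_top.ne)
                measurableSet_closedBall ?_
              intro x hx
              refine (hfb x (hsub hx)).trans ?_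
              exact mul_le_mul_of_nonneg_left (mem_closedBall_zero_iff.1 hx) hM0
          _ = M * (t₀ * r) * (ω * (t₀ * r) ^ d) := by
              rw [setIntegral_const, smul_eq_mul, measureReal_def, hvol (t₀ * r) ht0r]; ring
      calc ((t₀ : ℝ) ^ d)⁻¹ * |∫ x in closedBall (0 : EuclideanSpace ℝ (Fin d)) (t₀ * r), f x|
          ≤ (t₀ ^ d)⁻¹ * (M * (t₀ * r) * (ω * (t₀ * r) ^ d)) :=
            mul_le_mul_of_nonneg_left habs (inv_nonneg.2 (pow_nonneg ht0.le d))
        _ = ω * M * r ^ (d + 1) * t₀ := by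
            rw [mul_pow]
            field_simp
            ring
    -- FTC along rays
    have hFTC : ∀ x : EuclideanSpace ℝ (Fin d),
        f x - f (t₀ • x) = ∫ t in t₀..1, (fderiv ℝ f (t • x)) x := by
      intro x
      have hder : ∀ t ∈ uIcc t₀ 1,
          HasDerivAt (fun s : ℝ => f (s • x)) ((fderiv ℝ f (t • x)) x) t := by
        intro t _
        have h1 : HasDerivAt (fun s : ℝ => s • x) x t := by
          simpa using (hasDerivAt_id t).smul_const x
        exact ((hdf (t • x)).hasFDerivAt.comp_hasDerivAt t h1 : _)
      have hcont : Continuous fun t : ℝ => (fderiv ℝ f (t • x)) x :=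
        Continuous.clm_apply ((hf.continuous_fderiv one_ne_zero).comp
          (continuous_id.smul continuous_const)) continuous_const
      rw [intervalIntegral.integral_eq_sub_of_hasDerivAt hder (hcont.intervalIntegrable _ _)]
      simp
    -- pointwise bound
    have hpt : ∀ x ∈ B, |f x - f (t₀ • x)| ≤ r * ∫ t in Ioc t₀ 1, ‖fderiv ℝ f (t • x)‖ := by
      intro x hx
      rw [hFTC x]
      have hxr : ‖x‖ ≤ r := mem_closedBall_zero_iff.1 hx
      have hcont1 : Continuous fun t : ℝ => (fderiv ℝ f (t • x)) x :=
        Continuous.clm_apply ((hf.continuous_fderiv one_ne_zero).comp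
          (continuous_id.smul continuous_const)) continuous_const
      calc |∫ t in t₀..1, (fderiv ℝ f (t • x)) x|
          ≤ ∫ t in t₀..1, ‖(fderiv ℝ f (t • x)) x‖ := by
            simpa [Real.norm_eq_abs] using
              intervalIntegral.norm_integral_le_integral_norm
                (f := fun t : ℝ => (fderiv ℝ f (t • x)) x) (μ := volume) ht1
        _ ≤ ∫ t in t₀..1, r * ‖fderiv ℝ f (t • x)‖ := by
            refine intervalIntegral.integral_mono_on ht1 (hcont1.norm.intervalIntegrable _ _)
              ((continuous_const.mul (hgc.comp
                (continuous_id.smul continuous_const))).intervalIntegrable _ _) ?_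
            intro t _
            calc ‖(fderiv ℝ f (t • x)) x‖ ≤ ‖fderiv ℝ f (t • x)‖ * ‖x‖ :=
                  ContinuousLinearMap.le_opNorm _ _
              _ ≤ r * ‖fderiv ℝ f (t • x)‖ := by
                  nlinarith [norm_nonneg (fderiv ℝ f (t • x))]
        _ = r * ∫ t in Ioc t₀ 1, ‖fderiv ℝ f (t • x)‖ := by
            rw [intervalIntegral.integral_const_mul, intervalIntegral.integral_of_le ht1]
    -- Fubini
    have hcderiv : Continuous fun p : ℝ × (EuclideanSpace ℝ (Fin d)) =>
        ‖fderiv ℝ f (p.1 • p.2)‖ := hgc.comp (continuous_fst.smul continuous_snd)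
    have hprod : Integrable (fun p : ℝ × EuclideanSpace ℝ (Fin d) => ‖fderiv ℝ f (p.1 • p.2)‖)
        ((volume.restrict (Ioc t₀ 1)).prod (volume.restrict B)) := by
      rw [Measure.prod_restrict]
      have h1 : IntegrableOn (fun p : ℝ × EuclideanSpace ℝ (Fin d) => ‖fderiv ℝ f (p.1 • p.2)‖)
          (Icc t₀ 1 ×ˢ B) (volume.prod volume) :=
        (hcderiv.continuousOn).integrableOn_compact (isCompact_Icc.prod hBc)
      exact h1.mono_set (prod_mono Ioc_subset_Icc_self subset_rfl)
    have hmargB : IntegrableOn (fun x => ∫ t in Ioc t₀ 1, ‖fderiv ℝ f (t • x)‖) B :=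
      Integrable.integral_prod_right
        (f := fun p : ℝ × EuclideanSpace ℝ (Fin d) => ‖fderiv ℝ f (p.1 • p.2)‖) hprod
    have hswap : (∫ x in B, ∫ t in Ioc t₀ 1, ‖fderiv ℝ f (t • x)‖)
        = ∫ t in Ioc t₀ 1, ∫ x in B, ‖fderiv ℝ f (t • x)‖ :=
      (integral_integral_swap (f := fun (t : ℝ) (x : EuclideanSpace ℝ (Fin d)) =>
        ‖fderiv ℝ f (t • x)‖) hprod).symm
    -- scaling bound for each t
    have hinner : ∀ t ∈ Ioc t₀ 1,
        (∫ x in B, ‖fderiv ℝ f (t • x)‖) ≤ t ^ (-(d : ℤ)) * I := by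
      intro t ht
      have htpos : 0 < t := ht0.trans ht.1
      rw [Measure.setIntegral_comp_smul_of_pos volume
          (fun y : EuclideanSpace ℝ (Fin d) => ‖fderiv ℝ f y‖) B htpos, hfin, smul_eq_mul,
        hsmulB t htpos, zpow_neg, zpow_natCast]
      refine mul_le_mul_of_nonneg_left ?_ (by positivity)
      refine setIntegral_mono_set hgint (ae_of_all _ fun x => norm_nonneg _) ?_
      refine HasSubset.Subset.eventuallyLE ?_
      rw [hBdef]
      exact closedBall_subset_closedBall (by nlinarith [ht.2])
    have hzc : IntegrableOn (fun t : ℝ => t ^ (-(d : ℤ)) * I) (Ioc t₀ 1) := by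
      refine (ContinuousOn.integrableOn_compact isCompact_Icc ?_).mono_set Ioc_subset_Icc_self
      refine ContinuousOn.mul ?_ continuousOn_const
      exact ContinuousOn.zpow₀ continuousOn_id _ fun t ht =>
        Or.inl (ne_of_gt (ht0.trans_le ht.1))
    have hmono2 : (∫ t in Ioc t₀ 1, ∫ x in B, ‖fderiv ℝ f (t • x)‖)
        ≤ ∫ t in Ioc t₀ 1, t ^ (-(d : ℤ)) * I := by
      exact setIntegral_mono_on hprod.integral_prod_left hzc measurableSet_Ioc hinner
    have hval : (∫ t in Ioc t₀ 1, t ^ (-(d : ℤ)) * I)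
        = ((t₀ ^ (1 - (d : ℤ)) - 1) / ((d : ℝ) - 1)) * I := by
      rw [← intervalIntegral.integral_of_le ht1, intervalIntegral.integral_mul_const,
        integral_zpow (Or.inr ⟨by omega, by
          intro h
          have := (mem_uIcc.1 h)
          rcases this with h' | h'
          · exact absurd h'.1 (not_le.2 ht0)
          · linarith [h'.2]⟩)]
      have h1 : (-(d : ℤ) + 1 : ℤ) = 1 - (d : ℤ) := by ring
      rw [h1]
      rw [show ((1:ℝ)) ^ ((1:ℤ) - (d:ℤ)) = 1 from one_zpow _]
      have hc : ((-(d:ℤ) : ℤ) : ℝ) + 1 = -(((d:ℝ)) - 1) := by push_cast; ring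
      rw [hc, div_neg]
      ring
    -- piece 1
    have p1 : |∫ x in B, (f x - f (t₀ • x))| ≤ r * I * t₀ ^ (1 - (d : ℤ)) / ((d : ℝ) - 1) := by
      have hA0 : (0:ℝ) ≤ t₀ ^ (1 - (d : ℤ)) := zpow_nonneg ht0.le _
      have hD : (0:ℝ) < (d : ℝ) - 1 := by linarith
      calc |∫ x in B, (f x - f (t₀ • x))| ≤ ∫ x in B, |f x - f (t₀ • x)| := by
            simpa [Real.norm_eq_abs] using
              norm_integral_le_integral_norm (μ := volume.restrict B)
                (fun x => f x - f (t₀ • x))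
        _ ≤ ∫ x in B, r * ∫ t in Ioc t₀ 1, ‖fderiv ℝ f (t • x)‖ := by
            refine setIntegral_mono_on ?_ (hmargB.const_mul r) hBm hpt
            exact ((hfc.sub (hfc.comp
              (continuous_const_smul t₀))).abs).continuousOn.integrableOn_compact hBc
        _ = r * ∫ x in B, ∫ t in Ioc t₀ 1, ‖fderiv ℝ f (t • x)‖ := by
            rw [integral_const_mul]
        _ = r * ∫ t in Ioc t₀ 1, ∫ x in B, ‖fderiv ℝ f (t • x)‖ := by rw [hswap]
        _ ≤ r * (((t₀ ^ (1 - (d : ℤ)) - 1) / ((d : ℝ) - 1)) * I) := by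
            refine mul_le_mul_of_nonneg_left ?_ hr.le
            rw [← hval]
            exact hmono2
        _ ≤ r * I * t₀ ^ (1 - (d : ℤ)) / ((d : ℝ) - 1) := by
            rw [show r * (((t₀ ^ (1 - (d : ℤ)) - 1) / ((d : ℝ) - 1)) * I)
                = r * I * (t₀ ^ (1 - (d : ℤ)) - 1) / ((d : ℝ) - 1) from by ring]
            rw [div_le_div_iff₀ hD hD]
            nlinarith [mul_nonneg hr.le hI0]
    -- combine
    have hsplit : (∫ x in B, f x)
        = (∫ x in B, (f x - f (t₀ • x))) + ∫ x in B, f (t₀ • x) := by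
      rw [integral_sub hfB hfcomp]
      ring
    calc |∫ x in B, f x| ≤ |∫ x in B, (f x - f (t₀ • x))| + |∫ x in B, f (t₀ • x)| := by
          rw [hsplit]; exact abs_add_le _ _
      _ ≤ ω * M * r ^ (d + 1) * t₀ + r * I * t₀ ^ (1 - (d : ℤ)) / ((d : ℝ) - 1) := by
          linarith
  by_cases hI : I = 0
  · rw [hI, Real.zero_rpow (by positivity), mul_zero]
    by_contra hcon
    push_neg at hcon
    set L := |∫ x in B, f x| with hL
    set C := ω * M * r ^ (d + 1) with hC
    have hC0 : 0 ≤ C := by positivity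
    set t₀ : ℝ := min 1 (L / (2 * (C + 1))) with ht₀
    have ht00 : 0 < t₀ := lt_min one_pos (by positivity)
    have := key t₀ ht00 (min_le_left _ _)
    rw [hI] at this
    have hle : C * t₀ ≤ L / 2 := by
      calc C * t₀ ≤ (C + 1) * (L / (2 * (C + 1))) := by
            refine mul_le_mul (by linarith) (min_le_right _ _) ht00.le (by linarith)
      _ = L / 2 := by field_simp
    have : L ≤ L / 2 := by
      calc L ≤ C * t₀ + r * 0 * t₀ ^ (1 - (d : ℤ)) / ((d : ℝ) - 1) := this
      _ = C * t₀ := by ring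
      _ ≤ L / 2 := hle
    linarith
  · have hIpos : 0 < I := lt_of_le_of_ne hI0 (Ne.symm hI)
    have hMpos : 0 < M := by nlinarith [mul_pos hω0 (pow_pos hr d)]
    set s : ℝ := I / (2 * ω * M * r ^ d) with hs
    have hs0 : 0 < s := by positivity
    have hs1 : s ≤ 1 := by
      rw [div_le_one (by positivity)]
      nlinarith
    set t₀ : ℝ := s ^ ((1 : ℝ) / d) with ht₀def
    have ht00 : 0 < t₀ := Real.rpow_pos_of_pos hs0 _
    have ht01 : t₀ ≤ 1 := Real.rpow_le_one hs0.le hs1 (by positivity)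
    have htd : t₀ ^ (d : ℕ) = s := by
      rw [ht₀def, ← Real.rpow_natCast (s ^ ((1 : ℝ) / d)) d, ← Real.rpow_mul hs0.le,
        one_div_mul_cancel hdne, Real.rpow_one]
    have key' := key t₀ ht00 ht01
    -- second term ≤ 2 * first term
    have h2 : r * I * t₀ ^ (1 - (d : ℤ)) / ((d : ℝ) - 1) ≤ 2 * (ω * M * r ^ (d + 1) * t₀) := by
      have hz : t₀ ^ (1 - (d : ℤ)) = t₀ * (t₀ ^ (d : ℕ))⁻¹ := by
        rw [zpow_sub₀ ht00.ne', zpow_one, zpow_natCast, div_eq_mul_inv]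
      have hd1 : (1 : ℝ) ≤ (d : ℝ) - 1 := by
        have : (2 : ℝ) ≤ (d : ℕ) := by exact_mod_cast hd
        linarith
      have heq : r * I * (t₀ * s⁻¹) = 2 * (ω * M * r ^ (d + 1) * t₀) := by
        rw [hs]
        field_simp
        ring
      rw [hz, htd]
      calc r * I * (t₀ * s⁻¹) / ((d : ℝ) - 1) ≤ r * I * (t₀ * s⁻¹) / 1 := by
            apply div_le_div_of_nonneg_left ?_ ?_ hd1 <;> positivity
      _ = 2 * (ω * M * r ^ (d + 1) * t₀) := by rw [div_one, heq]
    -- first term bound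
    have h1 : ω * M * r ^ (d + 1) * t₀ ≤
        (ω + 1) * (r ^ d * M ^ (((d : ℝ) - 1) / d) * I ^ ((1 : ℝ) / d)) := by
      have hRnn : 0 ≤ (ω + 1) * (r ^ d * M ^ (((d : ℝ) - 1) / d) * I ^ ((1 : ℝ) / d)) := by
        positivity
      refine le_of_pow_le_pow_left₀ (n := d) (by omega) hRnn ?_
      have hMpow : (M ^ (((d : ℝ) - 1) / d)) ^ (d : ℕ) = M ^ (e + 1 : ℕ) := by
        rw [← Real.rpow_natCast (M ^ (((d : ℝ) - 1) / d)) d, ← Real.rpow_mul hM0,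
          div_mul_cancel₀ _ hdne]
        rw [show ((d : ℝ) - 1) = ((e + 1 : ℕ) : ℝ) by push_cast [hd2]; ring,
          Real.rpow_natCast]
      have hIpow : (I ^ ((1 : ℝ) / d)) ^ (d : ℕ) = I := by
        rw [← Real.rpow_natCast (I ^ ((1 : ℝ) / d)) d, ← Real.rpow_mul hI0,
          one_div_mul_cancel hdne, Real.rpow_one]
      rw [mul_pow (ω * M * r ^ (d + 1)) t₀, htd]
      simp only [mul_pow]
      rw [hMpow, hIpow]
      have hfinal : ω ^ (e + 1) / 2 ≤ (ω + 1) ^ (e + 2) := by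
        have h3 : ω ^ (e + 1) ≤ (ω + 1) ^ (e + 1) := pow_le_pow_left₀ hω0.le (by linarith) _
        have h4 : (ω + 1) ^ (e + 1) ≤ (ω + 1) ^ (e + 2) :=
          pow_le_pow_right₀ (by linarith) (by omega)
        have h5 : (0:ℝ) ≤ ω ^ (e + 1) := by positivity
        linarith
      calc ω ^ d * M ^ d * (r ^ (d + 1)) ^ d * s
          = (ω ^ (e + 1) / 2) * (M ^ (e + 1) * ((r ^ (e + 2)) ^ (e + 2) * I)) := by
            rw [hs]; simp only [hd2]; field_simp; ring
        _ ≤ (ω + 1) ^ (e + 2) * (M ^ (e + 1) * ((r ^ (e + 2)) ^ (e + 2) * I)) := by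
            refine mul_le_mul_of_nonneg_right hfinal (by positivity)
        _ = (ω + 1) ^ d * ((r ^ d) ^ d * M ^ (e + 1) * I) := by
            simp only [hd2]; ring
    calc |∫ x in B, f x| ≤ ω * M * r ^ (d + 1) * t₀
          + r * I * t₀ ^ (1 - (d : ℤ)) / ((d : ℝ) - 1) := key'
    _ ≤ 3 * (ω * M * r ^ (d + 1) * t₀) := by linarith
    _ ≤ 3 * ((ω + 1) * (r ^ d * M ^ (((d : ℝ) - 1) / d) * I ^ ((1 : ℝ) / d))) := by linarith
    _ = 3 * (ω + 1) * r ^ d * M ^ (((d : ℝ) - 1) / d) * I ^ ((1 : ℝ) / d) := by ring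
end
end
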